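/- Let n, m ∈ ℕ, let a = (a_1, ..., a_n) : I → ℝ^n be an (m−1)-times continuously differentiable function, and let f : I → ℝ^n be a fundamental system of solutions of y^{(n)} = a_1 y^{(n-1)} + ... + a_n y. Define X_a := (a | e_1 | ... | e_{n-1}) and Y_f := (f^{(n-1)} | ... | f' | f). Then for every ℓ ∈ {0, ..., m+n−1} and every i with max(ℓ−n+1, 0) ≤ i ≤ min(ℓ, m), one has f^{(ℓ)} = Y_f · B_i(X_a, X_a', ..., X_a^{(i-1)}) · e_{n+i−ℓ} on I. -/

import Mathlib

open Matrix

/-- Noncommutative complete Bell polynomials: `B_0 = I_n`,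
`B_{m+1}(X_1,…,X_{m+1}) = ∑_{j=0}^m C(m,j) B_j(X_1,…,X_j) X_{m+1-j}`.
Here `X : Fin m → _` with `X i` playing the role of `X_{i+1}`. -/
noncomputable def Bell {n : ℕ} :
    (m : ℕ) → (Fin m → Matrix (Fin n) (Fin n) ℝ) → Matrix (Fin n) (Fin n) ℝ
  | 0, _ => 1
  | m + 1, X => ∑ j : Fin (m + 1),
      (Nat.choose m (j : ℕ) : ℝ) •
        (Bell (j : ℕ) (fun i : Fin (j : ℕ) => X (Fin.castLE (by omega) i)) *
          X ⟨m - (j : ℕ), by omega⟩)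

/-- Entrywise `k`-th derivative (within `I`) of a matrix-valued function. -/
noncomputable def matD {n : ℕ} (I : Set ℝ) (X : ℝ → Matrix (Fin n) (Fin n) ℝ) (k : ℕ)
    (x : ℝ) : Matrix (Fin n) (Fin n) ℝ :=
  Matrix.of fun p q => iteratedDerivWithin k (fun t => X t p q) I x

/-- `B_j(X, X', …, X^{(j-1)})` evaluated at `x` (derivatives within `I`). -/
noncomputable def BellD {n : ℕ} (I : Set ℝ) (X : ℝ → Matrix (Fin n) (Fin n) ℝ) (j : ℕ)
    (x : ℝ) : Matrix (Fin n) (Fin n) ℝ :=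
  Bell j (fun i : Fin j => matD I X (i : ℕ) x)

/-- Generalized Wronskian `W_f^k = det(f^{(k_1)} | … | f^{(k_n)})` (derivatives within `I`). -/
noncomputable def genW {n : ℕ} (I : Set ℝ) (f : ℝ → Fin n → ℝ) (k : Fin n → ℕ) (x : ℝ) : ℝ :=
  Matrix.det (Matrix.of fun p q => iteratedDerivWithin (k q) (fun t => f t p) I x)

/-- The multi-index `(n-1, n-2, …, 1, 0)` of the ordinary Wronskian. -/
def wIdx (n : ℕ) : Fin n → ℕ := fun q => n - 1 - (q : ℕ)

/-- The multi-index `(n+d, n-1, …, j+1, j-1, …, 1, 0)`. -/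
def dIdx (n d j : ℕ) : Fin n → ℕ :=
  fun q => if (q : ℕ) = 0 then n + d
    else if j < n - (q : ℕ) then n - (q : ℕ) else n - (q : ℕ) - 1

/-- `Φ_f^{[j]} = (-1)^{n-j-1} W_f^{(n,n-1,…,j+1,j-1,…,0)} / W_f`. -/
noncomputable def Phi {n : ℕ} (I : Set ℝ) (f : ℝ → Fin n → ℝ) (j : ℕ) (x : ℝ) : ℝ :=
  (-1 : ℝ) ^ (n - j - 1) * genW I f (dIdx n 0 j) x / genW I f (wIdx n) x

/-- The `1`-indexed standard basis vector `e_i` of `ℝ^n`. -/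
def stdB (n i : ℕ) : Fin n → ℝ := fun p => if (p : ℕ) + 1 = i then 1 else 0

/-- The matrix `X_a = (a | e_1 | … | e_{n-1})`. -/
def colMat {n : ℕ} (a : ℝ → Fin n → ℝ) (x : ℝ) : Matrix (Fin n) (Fin n) ℝ :=
  Matrix.of fun p q =>
    if (q : ℕ) = 0 then a x p else if (p : ℕ) + 1 = (q : ℕ) then 1 else 0

/-- The matrix `Y_f = (f^{(n-1)} | … | f' | f)` (derivatives within `I`). -/
noncomputable def Yfun {n : ℕ} (I : Set ℝ) (f : ℝ → Fin n → ℝ) (x : ℝ) :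
    Matrix (Fin n) (Fin n) ℝ :=
  Matrix.of fun p q => iteratedDerivWithin (n - 1 - (q : ℕ)) (fun t => f t p) I x

/-- The `1`-indexed component `a_i` of `a : I → ℝ^n`, with `a_i := 0` for `i > n`. -/
noncomputable def aExt {n : ℕ} (a : ℝ → Fin n → ℝ) (i : ℕ) : ℝ → ℝ :=
  fun t => if h : i - 1 < n then a t ⟨i - 1, h⟩ else 0

/-- `y` is an `n`-times differentiable (on `I`) solution of
`y^{(n)} = a_1 y^{(n-1)} + ⋯ + a_n y`, where `a i` is `a_{i+1}`. -/
def SolvesDE {n : ℕ} (I : Set ℝ) (a : ℝ → Fin n → ℝ) (y : ℝ → ℝ) : Prop :=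
  (∀ k < n, DifferentiableOn ℝ (iteratedDerivWithin k y I) I) ∧
    ∀ x ∈ I, iteratedDerivWithin n y I x =
      ∑ i : Fin n, a x i * iteratedDerivWithin (n - 1 - (i : ℕ)) y I x

/-- `f : I → ℝ^n` is a fundamental system of solutions of
`y^{(n)} = a_1 y^{(n-1)} + ⋯ + a_n y`: each component solves the equation and the
components are linearly independent functions on `I`. -/
def FundSystem {n : ℕ} (I : Set ℝ) (a : ℝ → Fin n → ℝ) (f : ℝ → Fin n → ℝ) : Prop :=
  (∀ p : Fin n, SolvesDE I a fun t => f t p) ∧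
    LinearIndependent ℝ fun p : Fin n => I.restrict fun t => f t p


open Matrix

section AuxLemmas

variable {s : Set ℝ}

lemma iterZeroFun (hs : UniqueDiffOn ℝ s) {x : ℝ} (hx : x ∈ s) (i : ℕ) :
    iteratedDerivWithin i (fun _ : ℝ => (0:ℝ)) s x = 0 := by
  rw [iteratedDerivWithin, iteratedFDerivWithin_zero_fun]
  simp

lemma iterAdd (hs : UniqueDiffOn ℝ s) (f : ℝ → ℝ) (k : ℕ) :
    ∀ (j : ℕ) {x : ℝ}, x ∈ s →
      iteratedDerivWithin (k + j) f s x
        = iteratedDerivWithin j (iteratedDerivWithin k f s) s x := by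
  intro j
  induction j with
  | zero => intro x hx; simp
  | succ j ih =>
    intro x hx
    rw [show k + (j+1) = (k + j) + 1 by ring,
      iteratedDerivWithin_succ,
      iteratedDerivWithin_succ]
    exact derivWithin_congr (fun y hy => ih hy) (ih hx)

lemma binomStep (i : ℕ) (F G : ℕ → ℝ) :
    ((∑ j ∈ Finset.range (i+1), (i.choose j : ℝ) * (F (j+1) * G (i-j)))
      + ∑ j ∈ Finset.range (i+1), (i.choose j : ℝ) * (F j * G (i+1-j)))
    = ∑ j ∈ Finset.range (i+2), ((i+1).choose j : ℝ) * (F j * G (i+1-j)) := by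
  rw [Finset.sum_range_succ' (fun j => ((i+1).choose j : ℝ) * (F j * G (i+1-j))) (i+1),
    Finset.sum_range_succ' (fun j => (i.choose j : ℝ) * (F j * G (i+1-j))) i]
  simp only [Nat.succ_sub_succ, Nat.choose_succ_succ, Nat.choose_zero_right, Nat.cast_add,
    Nat.cast_one, add_mul, Finset.sum_add_distrib]
  rw [Finset.sum_range_succ (fun j => (i.choose (j+1) : ℝ) * (F (j+1) * G (i-j))) i]
  simp [Nat.choose_succ_self]
  ring

lemma leibnizIter (hs : UniqueDiffOn ℝ s) :
    ∀ (i : ℕ) (f g : ℝ → ℝ), ContDiffOn ℝ i f s → ContDiffOn ℝ i g s →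
      ∀ x ∈ s,
      iteratedDerivWithin i (fun t => f t * g t) s x
        = ∑ j ∈ Finset.range (i+1), (i.choose j : ℝ) *
            (iteratedDerivWithin j f s x * iteratedDerivWithin (i-j) g s x) := by
  intro i
  induction i with
  | zero => intro f g _ _ x hx; simp
  | succ i ih =>
    intro f g hf hg x hx
    have h1 : (1 : WithTop ℕ∞) ≤ (i+1 : ℕ) := by exact_mod_cast Nat.succ_le_succ (Nat.zero_le i)
    have hf1 : DifferentiableOn ℝ f s := hf.differentiableOn (by simp)
    have hg1 : DifferentiableOn ℝ g s := hg.differentiableOn (by simp)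
    have hle : ((i:ℕ) : WithTop ℕ∞) + 1 ≤ ((i+1 : ℕ) : WithTop ℕ∞) := by
      exact_mod_cast le_refl (i+1)
    have hf' : ContDiffOn ℝ i (derivWithin f s) s := hf.derivWithin hs hle
    have hg' : ContDiffOn ℝ i (derivWithin g s) s := hg.derivWithin hs hle
    have hfi : ContDiffOn ℝ i f s := hf.of_le (by exact_mod_cast Nat.le_succ i)
    have hgi : ContDiffOn ℝ i g s := hg.of_le (by exact_mod_cast Nat.le_succ i)
    have key : Set.EqOn (derivWithin (fun t => f t * g t) s)
        ((fun t => derivWithin f s t * g t) + fun t => f t * derivWithin g s t) s := by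
      intro y hy
      exact derivWithin_fun_mul (hf1 y hy) (hg1 y hy)
    calc iteratedDerivWithin (i+1) (fun t => f t * g t) s x
        = iteratedDerivWithin i (derivWithin (fun t => f t * g t) s) s x :=
          congrFun iteratedDerivWithin_succ' x
      _ = iteratedDerivWithin i
            ((fun t => derivWithin f s t * g t) + fun t => f t * derivWithin g s t) s x :=
          iteratedDerivWithin_congr key hx
      _ = iteratedDerivWithin i (fun t => derivWithin f s t * g t) s x
          + iteratedDerivWithin i (fun t => f t * derivWithin g s t) s x :=
          iteratedDerivWithin_add hx hs ((hf'.mul hgi) x hx) ((hfi.mul hg') x hx)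
      _ = (∑ j ∈ Finset.range (i+1), (i.choose j : ℝ) *
            (iteratedDerivWithin (j+1) f s x * iteratedDerivWithin (i-j) g s x))
          + ∑ j ∈ Finset.range (i+1), (i.choose j : ℝ) *
            (iteratedDerivWithin j f s x * iteratedDerivWithin (i-j+1) g s x) := by
          rw [ih _ _ hf' hgi x hx, ih _ _ hfi hg' x hx]
          congr 1
          · exact Finset.sum_congr rfl fun j _ => by
              rw [← iteratedDerivWithin_succ']
          · exact Finset.sum_congr rfl fun j _ => by
              rw [← iteratedDerivWithin_succ']
      _ = ∑ j ∈ Finset.range (i+1+1), ((i+1).choose j : ℝ) *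
            (iteratedDerivWithin j f s x * iteratedDerivWithin (i+1-j) g s x) := by
          have := binomStep i (fun j => iteratedDerivWithin j f s x)
            (fun j => iteratedDerivWithin j g s x)
          beta_reduce at this ⊢
          rw [← this]
          congr 1
          exact Finset.sum_congr rfl fun j hj => by
            rw [show i - j + 1 = i + 1 - j by
              have := Finset.mem_range.1 hj; omega]

lemma contDiffOnOfIter (hs : UniqueDiffOn ℝ s) :
    ∀ (k : ℕ) (f : ℝ → ℝ) (j : ℕ),
      (∀ i < k, DifferentiableOn ℝ (iteratedDerivWithin i f s) s) →
      ContDiffOn ℝ j (iteratedDerivWithin k f s) s →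
      ContDiffOn ℝ (k + j : ℕ) f s := by
  intro k
  induction k with
  | zero => intro f j _ h; simpa [iteratedDerivWithin_zero] using h
  | succ k ih =>
    intro f j hdiff htop
    have h0 : DifferentiableOn ℝ f s := by
      have := hdiff 0 (Nat.succ_pos k); simpa [iteratedDerivWithin_zero] using this
    have hEq : ∀ i : ℕ, Set.EqOn (iteratedDerivWithin i (derivWithin f s) s)
        (iteratedDerivWithin (i+1) f s) s :=
      fun i y hy => (congrFun iteratedDerivWithin_succ' y).symm
    have hrec : ContDiffOn ℝ (k + j : ℕ) (derivWithin f s) s := by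
      apply ih (derivWithin f s) j
      · intro i hi
        exact (hdiff (i+1) (by omega)).congr (fun y hy => hEq i hy)
      · exact htop.congr (fun y hy => hEq k hy)
    have := (contDiffOn_succ_iff_derivWithin (n := (k+j : ℕ)) hs).2
      ⟨h0, by simp, hrec⟩
    have h2 : ContDiffOn ℝ ((k + j : ℕ) + 1 : ℕ) f s := by exact_mod_cast this
    rw [show k + 1 + j = (k + j) + 1 by ring]
    exact h2

lemma iterContDiffOn (hs : UniqueDiffOn ℝ s) :
    ∀ (k : ℕ) (f : ℝ → ℝ) (j : ℕ), ContDiffOn ℝ (k + j : ℕ) f s →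
      ContDiffOn ℝ j (iteratedDerivWithin k f s) s := by
  intro k
  induction k with
  | zero => intro f j h; simpa [iteratedDerivWithin_zero] using h
  | succ k ih =>
    intro f j h
    have h' : ContDiffOn ℝ (k + j : ℕ) (derivWithin f s) s := by
      apply h.derivWithin hs
      exact_mod_cast (by omega : k + j + 1 ≤ k + 1 + j)
    exact (ih (derivWithin f s) j h').congr (fun y hy => congrFun iteratedDerivWithin_succ' y)

lemma iterFinsum (hs : UniqueDiffOn ℝ s) {ι : Type*} [DecidableEq ι] (T : Finset ι)
    (F : ι → ℝ → ℝ) (i : ℕ) (hF : ∀ r ∈ T, ContDiffOn ℝ i (F r) s) {x : ℝ} (hx : x ∈ s) :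
    iteratedDerivWithin i (fun t => ∑ r ∈ T, F r t) s x
      = ∑ r ∈ T, iteratedDerivWithin i (F r) s x := by
  induction T using Finset.induction with
  | empty => simpa using iterZeroFun hs hx i
  | @insert c T hc ih =>
    have hc1 : ContDiffOn ℝ i (F c) s := hF c (Finset.mem_insert_self c T)
    have hrest : ContDiffOn ℝ i (fun t => ∑ r ∈ T, F r t) s :=
      ContDiffOn.sum fun r hr => hF r (Finset.mem_insert_of_mem hr)
    have hco : Set.EqOn (fun t => ∑ r ∈ insert c T, F r t)
        (F c + fun t => ∑ r ∈ T, F r t) s := by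
      intro y hy; simp [Finset.sum_insert hc]
    rw [iteratedDerivWithin_congr hco hx,
      iteratedDerivWithin_add hx hs (hc1 x hx) (hrest x hx), Finset.sum_insert hc,
      ih (fun r hr => hF r (Finset.mem_insert_of_mem hr))]

end AuxLemmas

/-- for a fundamental system `f` of `y^{(n)} = a_1 y^{(n-1)} + ⋯ + a_n y`,
for every `ℓ ≤ m+n-1` and every `i` with `max(ℓ-n+1,0) ≤ i ≤ min(ℓ,m)`,
`f^{(ℓ)} = Y_f · B_i(X_a,…,X_a^{(i-1)}) · e_{n+i-ℓ}` on `I`. -/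
theorem stmt_4 (n m : ℕ) (hn : 0 < n) (hm : 0 < m) (I : Set ℝ) (hIo : IsOpen I)
    (hIne : I.Nonempty) (hIc : I.OrdConnected) (a f : ℝ → Fin n → ℝ)
    (ha : ∀ i : Fin n, ContDiffOn ℝ ((m - 1 : ℕ) : ℕ∞) (fun t => a t i) I)
    (hf : FundSystem I a f) :
    ∀ ℓ ≤ m + n - 1, ∀ i : ℕ, ℓ + 1 - n ≤ i → i ≤ ℓ → i ≤ m → ∀ x ∈ I,
      (fun p => iteratedDerivWithin ℓ (fun t => f t p) I x) =
        (Yfun I f x * BellD I (colMat a) i x).mulVec (stdB n (n + i - ℓ)) := by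
  obtain ⟨hsol, _hli⟩ := hf
  have hs : UniqueDiffOn ℝ I := hIo.uniqueDiffOn
  -- regularity of each component: C^{n-1+(m-1)}
  have freg : ∀ p : Fin n, ContDiffOn ℝ ((n - 1 + (m - 1) : ℕ)) (fun t => f t p) I := by
    intro p
    obtain ⟨hdiff, hde⟩ := hsol p
    have base : ∀ j : ℕ, j ≤ m - 1 →
        ContDiffOn ℝ ((n - 1 + j : ℕ)) (fun t => f t p) I := by
      intro j
      induction j with
      | zero =>
        intro _
        apply contDiffOn_of_differentiableOn_deriv
        intro k hk
        have hk' : k ≤ n - 1 + 0 := by exact_mod_cast hk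
        exact hdiff k (by omega)
      | succ j ihj =>
        intro hj1
        have hC : ContDiffOn ℝ ((n - 1 + j : ℕ)) (fun t => f t p) I := ihj (by omega)
        have hsum : ContDiffOn ℝ (j : ℕ)
            (fun x => ∑ r : Fin n, a x r *
              iteratedDerivWithin (n - 1 - (r : ℕ)) (fun t => f t p) I x) I := by
          apply ContDiffOn.sum
          intro r _
          apply ContDiffOn.mul
          · refine (ha r).of_le ?_
            exact_mod_cast (by omega : j ≤ m - 1)
          · refine iterContDiffOn hs _ _ j (hC.of_le ?_)
            exact_mod_cast (by omega : n - 1 - (r : ℕ) + j ≤ n - 1 + j)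
        have hiterder : ContDiffOn ℝ (j : ℕ)
            (derivWithin (iteratedDerivWithin (n - 1) (fun t => f t p) I) I) I := by
          apply hsum.congr
          intro y hy
          have h1 : iteratedDerivWithin ((n - 1) + 1) (fun t => f t p) I y
              = derivWithin (iteratedDerivWithin (n - 1) (fun t => f t p) I) I y :=
            congrFun iteratedDerivWithin_succ y
          rw [show (n - 1) + 1 = n by omega] at h1
          rw [← h1]
          exact hde y hy
        have hC1 : ContDiffOn ℝ ((j + 1 : ℕ))
            (iteratedDerivWithin (n - 1) (fun t => f t p) I) I := by
          have hdn : DifferentiableOn ℝ (iteratedDerivWithin (n - 1) (fun t => f t p) I) I :=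
            hdiff (n - 1) (by omega)
          have := (contDiffOn_succ_iff_derivWithin (n := (j : ℕ)) hs).2
            ⟨hdn, by simp, hiterder⟩
          exact_mod_cast this
        have := contDiffOnOfIter hs (n - 1) (fun t => f t p) (j + 1)
          (fun i hi => hdiff i (by omega)) hC1
        exact this
    exact base (m - 1) le_rfl
  -- the key identity
  have key : ∀ p : Fin n, ∀ i : ℕ, i ≤ m → ∀ q : Fin n, ∀ x ∈ I,
      iteratedDerivWithin (n - 1 - (q : ℕ) + i) (fun t => f t p) I x
        = (Yfun I f x * BellD I (colMat a) i x) p q := by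
    intro p i
    obtain ⟨hdiffp, hdep⟩ := hsol p
    induction i using Nat.strong_induction_on with
    | _ i IH =>
      cases i with
      | zero =>
        intro _ q x hx
        have hB : BellD I (colMat a) 0 x = 1 := by simp [BellD, Bell]
        simp [hB, Yfun]
      | succ i =>
        intro hi1 q x hx
        have him : i ≤ m - 1 := by omega
        set fp : ℝ → ℝ := fun t => f t p with hfp
        set u : Fin n → ℝ → ℝ := fun r => iteratedDerivWithin (n - 1 - (r : ℕ)) fp I with hu
        have e1 : n - 1 - (q : ℕ) + (i + 1) = (n - (q : ℕ)) + i := by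
          have := q.isLt; omega
        rw [e1, iterAdd hs fp (n - (q : ℕ)) i hx]
        have hEq : Set.EqOn (iteratedDerivWithin (n - (q : ℕ)) fp I)
            (fun t => ∑ r : Fin n, u r t * colMat a t r q) I := by
          intro y hy
          show iteratedDerivWithin (n - (q : ℕ)) fp I y
            = ∑ r : Fin n, u r y * colMat a y r q
          by_cases h0 : (q : ℕ) = 0
          · simp only [h0, Nat.sub_zero]
            rw [hdep y hy]
            refine Finset.sum_congr rfl fun r _ => ?_
            simp [u, colMat, h0, mul_comm]
          · have hq1 : (q : ℕ) - 1 < n := by have := q.isLt; omega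
            have hone : ∑ r : Fin n, u r y * colMat a y r q
                = u ⟨(q : ℕ) - 1, hq1⟩ y := by
              rw [Finset.sum_eq_single (⟨(q : ℕ) - 1, hq1⟩ : Fin n)]
              · simp [colMat, h0, show (q : ℕ) - 1 + 1 = (q : ℕ) by omega]
              · intro b _ hb
                have hbne : (b : ℕ) + 1 ≠ (q : ℕ) := by
                  intro hcon
                  apply hb
                  apply Fin.ext
                  simp; omega
                simp [colMat, h0, hbne]
              · intro hcon; exact absurd (Finset.mem_univ _) hcon
            rw [hone]
            simp only [u]
            rw [show n - 1 - ((q : ℕ) - 1) = n - (q : ℕ) by omega]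
        rw [iteratedDerivWithin_congr hEq hx]
        have hXcd : ∀ r : Fin n, ContDiffOn ℝ (i : ℕ) (fun t => colMat a t r q) I := by
          intro r
          by_cases h0 : (q : ℕ) = 0
          · have h1 : ContDiffOn ℝ (i : ℕ) (fun t => a t r) I := by
              refine (ha r).of_le ?_
              exact_mod_cast him
            simp only [colMat, Matrix.of_apply, if_pos h0]
            exact h1
          · simp only [colMat, Matrix.of_apply, if_neg h0]
            exact contDiffOn_const
        have hucd : ∀ r : Fin n, ContDiffOn ℝ (i : ℕ) (u r) I := by
          intro r
          refine iterContDiffOn hs _ _ i ((freg p).of_le ?_)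
          exact_mod_cast (by omega : n - 1 - (r : ℕ) + i ≤ n - 1 + (m - 1))
        rw [iterFinsum hs Finset.univ (fun r t => u r t * colMat a t r q) i
          (fun r _ => (hucd r).mul (hXcd r)) hx]
        have hterm : ∀ r : Fin n,
            iteratedDerivWithin i (fun t => u r t * colMat a t r q) I x
              = ∑ j ∈ Finset.range (i + 1), (i.choose j : ℝ) *
                  ((Yfun I f x * BellD I (colMat a) j x) p r
                    * matD I (colMat a) (i - j) x r q) := by
          intro r
          rw [leibnizIter hs i (u r) (fun t => colMat a t r q) (hucd r) (hXcd r) x hx]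
          refine Finset.sum_congr rfl fun j hj => ?_
          have hji : j ≤ i := by have := Finset.mem_range.1 hj; omega
          have h2 : iteratedDerivWithin j (u r) I x
              = (Yfun I f x * BellD I (colMat a) j x) p r := by
            rw [hu]
            rw [← iterAdd hs fp (n - 1 - (r : ℕ)) j hx]
            exact IH j (by omega) (by omega) r x hx
          rw [h2]
          rfl
        rw [Finset.sum_congr rfl fun r _ => hterm r]
        -- now pure algebra
        rw [Finset.sum_comm]
        have hRHS : (Yfun I f x * BellD I (colMat a) (i + 1) x) p q
            = ∑ j ∈ Finset.range (i + 1), (i.choose j : ℝ) *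
                ∑ r : Fin n, ((Yfun I f x * BellD I (colMat a) j x) p r
                  * matD I (colMat a) (i - j) x r q) := by
          have hBell : BellD I (colMat a) (i + 1) x
              = ∑ j : Fin (i + 1), (i.choose (j : ℕ) : ℝ) •
                  (BellD I (colMat a) (j : ℕ) x * matD I (colMat a) (i - (j : ℕ)) x) := by
            show Bell (i + 1) (fun k : Fin (i+1) => matD I (colMat a) (k : ℕ) x) = _
            rw [Bell]
            refine Finset.sum_congr rfl fun j _ => ?_
            congr 1
          rw [hBell, Matrix.mul_sum]
          rw [Matrix.sum_apply]
          rw [← Fin.sum_univ_eq_sum_range (fun j => (i.choose j : ℝ) *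
                ∑ r : Fin n, ((Yfun I f x * BellD I (colMat a) j x) p r
                  * matD I (colMat a) (i - j) x r q))]
          refine Finset.sum_congr rfl fun j _ => ?_
          rw [Matrix.mul_smul, Matrix.smul_apply, ← Matrix.mul_assoc]
          rw [Matrix.mul_apply (M := Yfun I f x * BellD I (colMat a) (j : ℕ) x)]
          rw [smul_eq_mul, Finset.mul_sum]
        rw [hRHS]
        refine Finset.sum_congr rfl fun j _ => ?_
        rw [Finset.mul_sum]
  -- conclude
  intro ℓ hℓ i h1 h2 h3 x hx
  funext p
  have hq0 : n + i - ℓ - 1 < n := by omega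
  set q0 : Fin n := ⟨n + i - ℓ - 1, hq0⟩ with hq0def
  have hcol : (Yfun I f x * BellD I (colMat a) i x).mulVec (stdB n (n + i - ℓ)) p
      = (Yfun I f x * BellD I (colMat a) i x) p q0 := by
    simp only [Matrix.mulVec, dotProduct, stdB]
    rw [Finset.sum_eq_single q0]
    · rw [if_pos (by simp [q0]; omega)]
      ring
    · intro b _ hb
      rw [if_neg, mul_zero]
      intro hcon
      apply hb
      apply Fin.ext
      simp [q0] at hcon ⊢
      omega
    · intro hcon; exact absurd (Finset.mem_univ _) hcon
  rw [hcol]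
  have := key p i h3 q0 x hx
  rw [show n - 1 - ((q0 : ℕ)) + i = ℓ by simp [q0]; omega] at this
  exact this
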